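/- arXiv:2110.04367 — 6 statements merged into one kernel-verified Lean document; each statement's English description precedes it below -/
import Mathlib

section
/- For x, y ∈ ℝ^d and ω ~ N(0, I_d), E[exp(-‖x‖²/2) exp(ω^⊤ x) · exp(-‖y‖²/2) exp(ω^⊤ y)] = exp(x^⊤ y). -/
open MeasureTheory ProbabilityTheory
open scoped ENNReal NNReal

lemma pdf_mul (t x : ℝ) :
    ProbabilityTheory.gaussianPDFReal 0 1 x * Real.exp (t * x)
      = Real.exp (t ^ 2 / 2) * ProbabilityTheory.gaussianPDFReal t 1 x := by
  simp only [ProbabilityTheory.gaussianPDFReal]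
  rw [mul_assoc, ← Real.exp_add]
  have h : -(x - 0) ^ 2 / (2 * ((1 : NNReal) : ℝ)) + t * x
      = t ^ 2 / 2 + -(x - t) ^ 2 / (2 * ((1 : NNReal) : ℝ)) := by push_cast; ring
  rw [h, Real.exp_add]; ring

lemma mgf1 (t : ℝ) : ∫ z, Real.exp (t * z) ∂ gaussianReal 0 1 = Real.exp (t ^ 2 / 2) := by
  rw [gaussianReal_of_var_ne_zero 0 one_ne_zero]
  have hm : Measurable fun x => (ProbabilityTheory.gaussianPDFReal 0 1 x).toNNReal :=
    (ProbabilityTheory.measurable_gaussianPDFReal 0 1).real_toNNReal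
  have h1 : ProbabilityTheory.gaussianPDF 0 1
      = fun x => ((ProbabilityTheory.gaussianPDFReal 0 1 x).toNNReal : ℝ≥0∞) := by
    ext x; simp [ProbabilityTheory.gaussianPDF, ENNReal.ofReal]
  rw [h1, integral_withDensity_eq_integral_smul hm]
  have : ∀ x : ℝ, (ProbabilityTheory.gaussianPDFReal 0 1 x).toNNReal • Real.exp (t * x)
      = Real.exp (t ^ 2 / 2) * ProbabilityTheory.gaussianPDFReal t 1 x := by
    intro x
    rw [NNReal.smul_def, smul_eq_mul, Real.coe_toNNReal _
      (ProbabilityTheory.gaussianPDFReal_nonneg 0 1 x), pdf_mul]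
  simp_rw [this]
  rw [integral_const_mul, ProbabilityTheory.integral_gaussianPDFReal_eq_one t one_ne_zero, mul_one]

lemma one_dim (a b : ℝ) :
    ∫ z, Real.exp (-(a ^ 2) / 2) * Real.exp (z * a)
        * (Real.exp (-(b ^ 2) / 2) * Real.exp (z * b)) ∂ gaussianReal 0 1
      = Real.exp (a * b) := by
  have h : ∀ z : ℝ, Real.exp (-(a ^ 2) / 2) * Real.exp (z * a)
        * (Real.exp (-(b ^ 2) / 2) * Real.exp (z * b))
      = (Real.exp (-(a ^ 2) / 2) * Real.exp (-(b ^ 2) / 2)) * Real.exp ((a + b) * z) := by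
    intro z
    rw [← Real.exp_add, ← Real.exp_add, ← Real.exp_add, ← Real.exp_add, ← Real.exp_add]
    congr 1; ring
  simp_rw [h]
  rw [integral_const_mul, mgf1, ← Real.exp_add, ← Real.exp_add]
  congr 1; ring

noncomputable def stdGaussian (d : ℕ) : Measure (Fin d → ℝ) :=
  Measure.pi fun _ => gaussianReal 0 1

def dotR {d : ℕ} (u v : Fin d → ℝ) : ℝ := ∑ i, u i * v i

theorem stmt2 (d : ℕ) (x y : Fin d → ℝ) :
    (∫ ω, (Real.exp (-(∑ i, x i ^ 2) / 2) * Real.exp (dotR ω x)) *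
          (Real.exp (-(∑ i, y i ^ 2) / 2) * Real.exp (dotR ω y)) ∂ stdGaussian d)
      = Real.exp (dotR x y) := by
  letI : MeasureSpace ℝ := ⟨gaussianReal 0 1⟩
  have hprod : ∀ ω : Fin d → ℝ,
      (Real.exp (-(∑ i, x i ^ 2) / 2) * Real.exp (dotR ω x)) *
        (Real.exp (-(∑ i, y i ^ 2) / 2) * Real.exp (dotR ω y))
      = ∏ i, (Real.exp (-(x i ^ 2) / 2) * Real.exp (ω i * x i)
          * (Real.exp (-(y i ^ 2) / 2) * Real.exp (ω i * y i))) := by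
    intro ω
    simp only [Finset.prod_mul_distrib, ← Real.exp_sum, dotR, ← Real.exp_add, Real.exp_eq_exp]
    simp only [Finset.sum_div, neg_div, Finset.sum_neg_distrib, Finset.sum_add_distrib]
  simp_rw [hprod]
  haveI : SigmaFinite (volume : Measure ℝ) := inferInstanceAs (SigmaFinite (gaussianReal 0 1))
  have : (stdGaussian d) = (volume : Measure (Fin d → ℝ)) := rfl
  rw [this, MeasureTheory.integral_fintype_prod_volume_eq_prod
    (f := fun i z => Real.exp (-(x i ^ 2) / 2) * Real.exp (z * x i)
      * (Real.exp (-(y i ^ 2) / 2) * Real.exp (z * y i)))]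
  have : ∀ i, (∫ z : ℝ, Real.exp (-(x i ^ 2) / 2) * Real.exp (z * x i)
      * (Real.exp (-(y i ^ 2) / 2) * Real.exp (z * y i))) = Real.exp (x i * y i) := fun i =>
    one_dim (x i) (y i)
  simp_rw [this, ← Real.exp_sum, dotR]
end

section
/- For x, y ∈ ℝ^d and ω ~ N(0, I_d), exp(x^⊤ y) = exp(-(‖x‖²+‖y‖²)/2) · E[cosh(ω^⊤(x+y))]. -/
open MeasureTheory ProbabilityTheory

open Real
open scoped NNReal ENNReal

lemma mgf_aux (t : ℝ) :
    Integrable (fun x => Real.exp (t * x)) (gaussianReal 0 1) ∧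
    ∫ x, Real.exp (t * x) ∂ gaussianReal 0 1 = Real.exp (t ^ 2 / 2) := by
  have hg0 : ∀ x, 0 ≤ gaussianPDFReal 0 1 x := gaussianPDFReal_nonneg 0 1
  have hkey : ∀ x : ℝ, gaussianPDFReal 0 1 x * Real.exp (t * x)
      = (Real.sqrt (2 * π))⁻¹ * Real.exp (t ^ 2 / 2)
        * Real.exp (-(1/2) * (x - t) ^ 2) := by
    intro x
    simp only [gaussianPDFReal, NNReal.coe_one, mul_one, sub_zero]
    rw [mul_assoc, ← Real.exp_add, mul_assoc, ← Real.exp_add]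
    congr 1
    ring
  have hint : Integrable (fun x : ℝ => Real.exp (-(1/2) * (x - t) ^ 2)) volume :=
    (integrable_exp_neg_mul_sq (by norm_num : (0:ℝ) < 1/2)).comp_sub_right t
  have hval : ∫ x : ℝ, Real.exp (-(1/2) * (x - t) ^ 2)
      = Real.sqrt (2 * π) := by
    rw [integral_sub_right_eq_self (fun x : ℝ => Real.exp (-(1/2) * x ^ 2)) t,
      integral_gaussian]
    rw [show π / (1/2) = 2 * π by ring]
  have hsqrt : Real.sqrt (2 * π) ≠ 0 := by
    positivity
  rw [gaussianReal_of_var_ne_zero 0 one_ne_zero]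
  constructor
  · rw [integrable_withDensity_iff (measurable_gaussianPDF 0 1)
      (ae_of_all _ fun x => ENNReal.ofReal_lt_top)]
    refine (hint.const_mul ((Real.sqrt (2 * π))⁻¹ * Real.exp (t ^ 2 / 2))).congr
      (ae_of_all _ fun x => ?_)
    simp only [gaussianPDF]
    rw [ENNReal.toReal_ofReal (hg0 x), mul_comm (Real.exp (t * x)), hkey x]
  · have hpdf : gaussianPDF 0 1 = fun x =>
        ((Real.toNNReal (gaussianPDFReal 0 1 x) : ℝ≥0) : ENNReal) := rfl
    rw [hpdf, integral_withDensity_eq_integral_smul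
      ((measurable_gaussianPDFReal 0 1).real_toNNReal)]
    have : ∀ x : ℝ, (Real.toNNReal (gaussianPDFReal 0 1 x) : ℝ≥0)
        • Real.exp (t * x)
        = (Real.sqrt (2 * π))⁻¹ * Real.exp (t ^ 2 / 2)
          * Real.exp (-(1/2) * (x - t) ^ 2) := by
      intro x
      rw [NNReal.smul_def, smul_eq_mul, Real.coe_toNNReal _ (hg0 x), hkey x]
    rw [integral_congr_ae (ae_of_all _ this), integral_const_mul, hval]
    field_simp

lemma exp_dot_integral {d : ℕ} (z : Fin d → ℝ) :
    Integrable (fun ω => Real.exp (dotR ω z)) (stdGaussian d) ∧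
    ∫ ω, Real.exp (dotR ω z) ∂ stdGaussian d = Real.exp ((∑ i, z i ^ 2) / 2) := by
  letI : MeasureSpace ℝ := ⟨gaussianReal 0 1⟩
  haveI : SigmaFinite (volume : Measure ℝ) := inferInstanceAs (SigmaFinite (gaussianReal 0 1))
  have hvol : stdGaussian d = (volume : Measure (Fin d → ℝ)) := rfl
  have hfun : ∀ ω : Fin d → ℝ, Real.exp (dotR ω z)
      = ∏ i, Real.exp (z i * ω i) := by
    intro ω
    rw [← Real.exp_sum, dotR]
    congr 1
    exact Finset.sum_congr rfl fun i _ => mul_comm _ _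
  constructor
  · rw [hvol]
    exact (Integrable.fintype_prod_dep (f := fun i x => Real.exp (z i * x))
      (fun i => (mgf_aux (z i)).1)).congr (ae_of_all _ fun ω => (hfun ω).symm)
  · rw [hvol]
    calc ∫ ω : Fin d → ℝ, Real.exp (dotR ω z)
        = ∫ ω : Fin d → ℝ, ∏ i, Real.exp (z i * (ω i)) := by
          exact integral_congr_ae (ae_of_all _ hfun)
      _ = ∏ i, ∫ x : ℝ, Real.exp (z i * x) :=
          integral_fintype_prod_eq_prod (fun i x => Real.exp (z i * x))
      _ = ∏ i, Real.exp (z i ^ 2 / 2) := by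
          exact Finset.prod_congr rfl fun i _ => (mgf_aux (z i)).2
      _ = Real.exp ((∑ i, z i ^ 2) / 2) := by
          rw [← Real.exp_sum, ← Finset.sum_div]

theorem stmt3 (d : ℕ) (x y : Fin d → ℝ) :
    Real.exp (dotR x y)
      = Real.exp (-((∑ i, x i ^ 2) + (∑ i, y i ^ 2)) / 2) *
        ∫ ω, Real.cosh (dotR ω (x + y)) ∂ stdGaussian d := by
  set z := x + y with hz
  have hneg : ∀ ω : Fin d → ℝ, Real.exp (dotR ω z) = Real.exp (dotR (-ω) (-z)) := by
    intro ω
    congr 1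
    simp [dotR]
  have hdotneg : ∀ ω : Fin d → ℝ, dotR ω (-z) = - dotR ω z := by
    intro ω
    simp [dotR, mul_neg]
  have hcosh : ∀ ω : Fin d → ℝ, Real.cosh (dotR ω z)
      = (Real.exp (dotR ω z) + Real.exp (dotR ω (-z))) / 2 := by
    intro ω
    rw [Real.cosh_eq, hdotneg ω]
  have h1 := exp_dot_integral z
  have h2 := exp_dot_integral (-z)
  have hsum : ∑ i, (-z) i ^ 2 = ∑ i, z i ^ 2 := by
    refine Finset.sum_congr rfl fun i _ => ?_
    simp
  have hci : ∫ ω, Real.cosh (dotR ω z) ∂ stdGaussian d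
      = Real.exp ((∑ i, z i ^ 2) / 2) := by
    rw [integral_congr_ae (ae_of_all _ hcosh)]
    rw [integral_div, integral_add h1.1 h2.1, h1.2, h2.2, hsum]
    ring
  rw [hci, ← Real.exp_add]
  congr 1
  have hzz : ∑ i, z i ^ 2 = (∑ i, x i ^ 2) + (∑ i, y i ^ 2) + 2 * dotR x y := by
    rw [dotR, Finset.mul_sum, ← Finset.sum_add_distrib, ← Finset.sum_add_distrib]
    refine Finset.sum_congr rfl fun i _ => ?_
    simp [hz]
    ring
  rw [hzz]
  ring
end

section
/- For x, y ∈ ℝ^d and ω ~ N(0, I_d), E[exp(ω^⊤(x+y)) cos(ω^⊤(x-y))] = exp(2 x^⊤ y) cos(‖x‖² - ‖y‖²). -/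
open MeasureTheory ProbabilityTheory

open Real

lemma pdf_smul (c : ℂ) (t : ℝ) :
    (gaussianPDFReal 0 1 t : ℂ) * Complex.exp (c * t)
      = ((Real.sqrt (2 * π))⁻¹ : ℝ) * Complex.exp (-(1/2) * t ^ 2 + c * t + 0) := by
  rw [gaussianPDFReal]
  simp only [mul_one, sub_zero]
  rw [Complex.ofReal_mul, Complex.ofReal_exp, mul_assoc, ← Complex.exp_add]
  congr 2
  · push_cast; ring
  · push_cast; ring

lemma gauss1_int (c : ℂ) :
    Integrable (fun t : ℝ => Complex.exp (c * t)) (gaussianReal 0 1) := by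
  rw [gaussianReal_of_var_ne_zero _ one_ne_zero]
  have hme : Measurable fun t : ℝ => (gaussianPDFReal 0 1 t).toNNReal :=
    (measurable_gaussianPDFReal 0 1).real_toNNReal
  have hpdf : gaussianPDF 0 1 = fun t => ((gaussianPDFReal 0 1 t).toNNReal : ENNReal) := rfl
  rw [hpdf, integrable_withDensity_iff_integrable_smul hme]
  have heq : (fun t : ℝ => (gaussianPDFReal 0 1 t).toNNReal • Complex.exp (c * t))
      = fun t : ℝ => ((Real.sqrt (2 * π))⁻¹ : ℝ) • Complex.exp (-(1/2) * t ^ 2 + c * t + 0) := by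
    funext t
    rw [NNReal.smul_def, Real.coe_toNNReal _ (gaussianPDFReal_nonneg 0 1 t),
      Complex.real_smul, Complex.real_smul, pdf_smul]
  rw [heq]
  exact (integrable_cexp_quadratic (by norm_num : (0:ℝ) < ((1:ℂ)/2).re) c 0).smul ((Real.sqrt (2 * π))⁻¹ : ℝ)

lemma gauss1 (c : ℂ) :
    ∫ t : ℝ, Complex.exp (c * t) ∂(gaussianReal 0 1) = Complex.exp (c ^ 2 / 2) := by
  rw [gaussianReal_of_var_ne_zero _ one_ne_zero]
  have hme : Measurable fun t : ℝ => (gaussianPDFReal 0 1 t).toNNReal :=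
    (measurable_gaussianPDFReal 0 1).real_toNNReal
  have hpdf : gaussianPDF 0 1 = fun t => ((gaussianPDFReal 0 1 t).toNNReal : ENNReal) := rfl
  rw [hpdf, integral_withDensity_eq_integral_smul hme]
  have heq : ∀ t : ℝ, (gaussianPDFReal 0 1 t).toNNReal • Complex.exp (c * t)
      = (((Real.sqrt (2 * π))⁻¹ : ℝ) : ℂ) * Complex.exp (-(1/2) * t ^ 2 + c * t + 0) := by
    intro t
    rw [NNReal.smul_def, Real.coe_toNNReal _ (gaussianPDFReal_nonneg 0 1 t),
      Complex.real_smul, pdf_smul]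
  simp_rw [heq]
  rw [integral_const_mul, integral_cexp_quadratic (by norm_num : (-(1/2) : ℂ).re < 0) c 0]
  have h2π : (0:ℝ) ≤ 2 * π := by positivity
  have hpow : ((π : ℂ) / -(-(1/2))) ^ (1/2 : ℂ) = ((Real.sqrt (2 * π) : ℝ) : ℂ) := by
    have : ((π : ℂ) / -(-(1/2))) = ((2 * π : ℝ) : ℂ) := by push_cast; ring
    rw [this, show ((1:ℂ)/2) = ((1/2 : ℝ) : ℂ) from by norm_num,
      ← Complex.ofReal_cpow h2π, Real.sqrt_eq_rpow]
  rw [hpow]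
  have hs : ((Real.sqrt (2 * π) : ℝ) : ℂ) ≠ 0 :=
    Complex.ofReal_ne_zero.mpr (Real.sqrt_ne_zero'.mpr (by positivity))
  rw [Complex.ofReal_inv, ← mul_assoc, inv_mul_cancel₀ hs, one_mul]
  congr 1
  ring

theorem stmt5 (d : ℕ) (x y : Fin d → ℝ) :
    (∫ ω, Real.exp (dotR ω (x + y)) * Real.cos (dotR ω (x - y)) ∂ stdGaussian d)
      = Real.exp (2 * dotR x y) * Real.cos ((∑ i, x i ^ 2) - (∑ i, y i ^ 2)) := by
  letI : MeasureSpace ℝ := ⟨gaussianReal 0 1⟩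
  set c : Fin d → ℂ := fun i => ((x i + y i : ℝ) : ℂ) + ((x i - y i : ℝ) : ℂ) * Complex.I with hc
  have hre : ∀ ω : Fin d → ℝ,
      Real.exp (dotR ω (x + y)) * Real.cos (dotR ω (x - y))
        = (∏ i, Complex.exp (c i * (ω i : ℂ))).re := by
    intro ω
    rw [← Complex.exp_sum]
    have hz : (∑ i, c i * (ω i : ℂ))
        = ((dotR ω (x + y) : ℝ) : ℂ) + ((dotR ω (x - y) : ℝ) : ℂ) * Complex.I := by
      simp only [dotR, hc, Pi.add_apply, Pi.sub_apply]
      push_cast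
      rw [Finset.sum_mul, ← Finset.sum_add_distrib]
      exact Finset.sum_congr rfl fun i _ => by ring
    rw [hz, Complex.exp_re]
    simp
  simp_rw [hre]
  haveI : SigmaFinite (volume : Measure ℝ) :=
    inferInstanceAs (SigmaFinite (gaussianReal 0 1))
  have hint : Integrable (fun ω : Fin d → ℝ => ∏ i, Complex.exp (c i * (ω i : ℂ)))
      (stdGaussian d) :=
    Integrable.fintype_prod (E := ℝ) (f := fun i t => Complex.exp (c i * (t : ℂ)))
      fun i => gauss1_int (c i)
  have hre2 := integral_re (𝕜 := ℂ) hint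
  simp only [RCLike.re_to_complex] at hre2
  rw [hre2]
  have hprod : (∫ ω, ∏ i, Complex.exp (c i * (ω i : ℂ)) ∂ stdGaussian d)
      = ∏ i, ∫ t : ℝ, Complex.exp (c i * (t : ℂ)) ∂(gaussianReal 0 1) := by
    exact integral_fintype_prod_eq_prod (E := fun _ : Fin d => ℝ)
      (fun i (t : ℝ) => Complex.exp (c i * (t : ℂ)))
  rw [hprod]
  simp_rw [gauss1]
  rw [← Complex.exp_sum]
  have hz2 : (∑ i, c i ^ 2 / 2)
      = ((2 * dotR x y : ℝ) : ℂ) + (((∑ i, x i ^ 2) - (∑ i, y i ^ 2) : ℝ) : ℂ) * Complex.I := by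
    have hterm : ∀ i ∈ (Finset.univ : Finset (Fin d)), c i ^ 2 / 2
        = (2 * ((x i : ℂ) * y i)) + ((x i : ℂ) ^ 2 - (y i : ℂ) ^ 2) * Complex.I := by
      intro i _
      simp only [hc]
      push_cast
      linear_combination (((x i : ℂ) - y i) ^ 2 / 2) * Complex.I_sq
    rw [Finset.sum_congr rfl hterm, Finset.sum_add_distrib, ← Finset.sum_mul]
    simp only [dotR]
    push_cast
    rw [Finset.mul_sum, Finset.sum_sub_distrib]
  rw [hz2, Complex.exp_re, Complex.add_re, Complex.add_im, Complex.ofReal_re,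
    Complex.ofReal_im, Complex.mul_re, Complex.mul_im, Complex.ofReal_re, Complex.ofReal_im,
    Complex.I_re, Complex.I_im]
  norm_num
end

section
/- For x, y ∈ ℝ^d and ω ~ N(0, I_d), E[cosh(ω^⊤(x+y)) cos(ω^⊤(x-y))] = exp(2 x^⊤ y) cos(‖x‖² - ‖y‖²). -/
open MeasureTheory ProbabilityTheory

open Complex
open scoped ENNReal NNReal

lemma gauss_pdf_eq : (gaussianPDF 0 1)
    = fun x => ((fun x => (gaussianPDFReal 0 1 x).toNNReal) x : ℝ≥0∞) := by
  ext x; simp [gaussianPDF, ENNReal.ofReal]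

lemma gauss_map (g : ℝ → ℂ) :
    ∫ x, g x ∂(gaussianReal 0 1)
      = ∫ x : ℝ, (gaussianPDFReal 0 1 x : ℂ) * g x := by
  rw [gaussianReal_of_var_ne_zero 0 one_ne_zero]
  have hmeas : Measurable fun x : ℝ => (gaussianPDFReal 0 1 x).toNNReal :=
    (measurable_gaussianPDFReal 0 1).real_toNNReal
  rw [gauss_pdf_eq, integral_withDensity_eq_integral_smul hmeas]
  congr 1; ext x
  simp [NNReal.smul_def, Real.coe_toNNReal _ (gaussianPDFReal_nonneg 0 1 x), Complex.real_smul]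

lemma pdf_mul_cexp (c : ℂ) (x : ℝ) : (gaussianPDFReal 0 1 x : ℂ) * Complex.exp (c * x)
    = ((Real.sqrt (2 * Real.pi))⁻¹ : ℂ) * Complex.exp (-(1/2 : ℂ) * x ^ 2 + c * x + 0) := by
  simp only [gaussianPDFReal]
  push_cast
  rw [mul_assoc, ← Complex.exp_add]
  norm_num
  ring_nf
  exact Or.inl trivial

lemma gauss_integrable (c : ℂ) :
    Integrable (fun x : ℝ => Complex.exp (c * x)) (gaussianReal 0 1) := by
  rw [gaussianReal_of_var_ne_zero 0 one_ne_zero]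
  have hmeas : Measurable fun x : ℝ => (gaussianPDFReal 0 1 x).toNNReal :=
    (measurable_gaussianPDFReal 0 1).real_toNNReal
  rw [gauss_pdf_eq, integrable_withDensity_iff_integrable_smul hmeas]
  have : (fun x : ℝ => (gaussianPDFReal 0 1 x).toNNReal • Complex.exp (c * x))
      = fun x : ℝ => ((Real.sqrt (2 * Real.pi))⁻¹ : ℂ) *
          Complex.exp (-(1/2 : ℂ) * x ^ 2 + c * x + 0) := by
    ext x
    rw [NNReal.smul_def, Real.coe_toNNReal _ (gaussianPDFReal_nonneg 0 1 x),
      Complex.real_smul, pdf_mul_cexp]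
  rw [this]
  exact (integrable_cexp_quadratic (by norm_num : (0:ℝ) < ((1:ℂ)/2).re) c 0).const_mul _

lemma gauss_cexp (c : ℂ) :
    ∫ x, Complex.exp (c * x) ∂(gaussianReal 0 1) = Complex.exp (c ^ 2 / 2) := by
  rw [gauss_map]
  simp_rw [pdf_mul_cexp c]
  rw [integral_const_mul, integral_cexp_quadratic (by norm_num : (-(1/2:ℂ)).re < 0) c 0]
  have h2 : ((Real.pi : ℂ) / -(-(1/2:ℂ))) ^ (1/2 : ℂ) = ((Real.sqrt (2 * Real.pi)) : ℂ) := by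
    rw [show ((Real.pi : ℂ) / -(-(1/2:ℂ))) = ((2 * Real.pi : ℝ) : ℂ) by push_cast; ring,
      show ((1:ℂ)/2) = ((1/2 : ℝ) : ℂ) by norm_num,
      ← Complex.ofReal_cpow (by positivity)]
    norm_num [Real.sqrt_eq_rpow]
  rw [h2, ← mul_assoc, show ((Real.sqrt (2*Real.pi) : ℂ))⁻¹ * (Real.sqrt (2*Real.pi)) = 1 by
    rw [inv_mul_cancel₀]; exact_mod_cast Real.sqrt_ne_zero'.mpr (by positivity), one_mul]
  congr 1
  ring

section pi
variable (d : ℕ) (c : Fin d → ℂ)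

lemma std_integrable : Integrable (fun ω => Complex.exp (∑ i, c i * ω i)) (stdGaussian d) := by
  letI : MeasureSpace ℝ := ⟨gaussianReal 0 1⟩
  haveI : SigmaFinite (volume : Measure ℝ) :=
    (inferInstance : SigmaFinite (gaussianReal 0 1))
  have h : stdGaussian d = (volume : Measure (Fin d → ℝ)) := rfl
  rw [h]
  simp_rw [Complex.exp_sum]
  exact Integrable.fintype_prod (f := fun i (x : ℝ) => Complex.exp (c i * (x:ℂ)))
    (fun i => gauss_integrable (c i))

lemma std_cexp :
    ∫ ω, Complex.exp (∑ i, c i * ω i) ∂(stdGaussian d)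
      = Complex.exp (∑ i, c i ^ 2 / 2) := by
  letI : MeasureSpace ℝ := ⟨gaussianReal 0 1⟩
  haveI : SigmaFinite (volume : Measure ℝ) :=
    (inferInstance : SigmaFinite (gaussianReal 0 1))
  have h : stdGaussian d = (volume : Measure (Fin d → ℝ)) := rfl
  rw [h]
  simp_rw [Complex.exp_sum]
  rw [show (volume : Measure (Fin d → ℝ)) = Measure.pi fun _ => volume from rfl]
  rw [integral_fintype_prod_eq_prod (f := fun i (x : ℝ) => Complex.exp (c i * x))]
  exact Finset.prod_congr rfl fun i _ => gauss_cexp (c i)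
end pi


theorem stmt6 (d : ℕ) (x y : Fin d → ℝ) :
    (∫ ω, Real.cosh (dotR ω (x + y)) * Real.cos (dotR ω (x - y)) ∂ stdGaussian d)
      = Real.exp (2 * dotR x y) * Real.cos ((∑ i, x i ^ 2) - (∑ i, y i ^ 2)) := by
  set r : ℝ := 2 * dotR x y with hr
  set s : ℝ := (∑ i, x i ^ 2) - (∑ i, y i ^ 2) with hs
  set a : Fin d → ℝ := x + y with ha
  set b : Fin d → ℝ := x - y with hb
  set c : Fin d → ℂ := fun i => (a i : ℂ) + (b i : ℂ) * I with hc
  set c' : Fin d → ℂ := fun i => -(a i : ℂ) + (b i : ℂ) * I with hc'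
  set F : (Fin d → ℝ) → ℂ := fun ω =>
    (Complex.exp (∑ i, c i * ω i) + Complex.exp (∑ i, c' i * ω i)) / 2 with hF
  have hFint : Integrable F (stdGaussian d) :=
    ((std_integrable d c).add (std_integrable d c')).div_const 2
  have hRe : ∀ ω, Real.cosh (dotR ω (x + y)) * Real.cos (dotR ω (x - y)) = (F ω).re := by
    intro ω
    have h1 : ∑ i, c i * ω i = (dotR ω a : ℝ) + (dotR ω b : ℝ) * I := by
      simp only [hc, dotR]
      push_cast
      rw [Finset.sum_mul, ← Finset.sum_add_distrib]
      exact Finset.sum_congr rfl fun i _ => by ring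
    have h2 : ∑ i, c' i * ω i = -(dotR ω a : ℝ) + (dotR ω b : ℝ) * I := by
      simp only [hc', dotR]
      push_cast
      rw [Finset.sum_mul, ← Finset.sum_neg_distrib, ← Finset.sum_add_distrib]
      exact Finset.sum_congr rfl fun i _ => by ring
    simp only [hF, h1, h2, ← ha, ← hb]
    rw [Complex.div_re]
    simp [Complex.exp_re, Complex.exp_im, Complex.add_re, Complex.add_im,
      Real.cosh_eq, Complex.normSq]
    ring
  simp_rw [ha, hb, hRe]
  have hint := integral_re (𝕜 := ℂ) (μ := stdGaussian d) hFint
  simp only [RCLike.re_to_complex] at hint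
  rw [hint]
  have hS : ∑ i, c i ^ 2 / 2 = (r : ℂ) + (s : ℂ) * I := by
    simp only [hc, ha, hb, hr, hs, dotR, Pi.add_apply, Pi.sub_apply]
    push_cast
    rw [Finset.mul_sum, ← Finset.sum_sub_distrib, Finset.sum_mul, ← Finset.sum_add_distrib]
    exact Finset.sum_congr rfl fun i _ => by
      linear_combination (((x i : ℂ) - y i) ^ 2 / 2) * Complex.I_sq
  have hS' : ∑ i, c' i ^ 2 / 2 = (r : ℂ) - (s : ℂ) * I := by
    simp only [hc', ha, hb, hr, hs, dotR, Pi.add_apply, Pi.sub_apply]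
    push_cast
    rw [Finset.mul_sum, ← Finset.sum_sub_distrib, Finset.sum_mul, ← Finset.sum_sub_distrib]
    exact Finset.sum_congr rfl fun i _ => by
      linear_combination (((x i : ℂ) - y i) ^ 2 / 2) * Complex.I_sq
  have hIF : ∫ ω, F ω ∂(stdGaussian d)
      = (Complex.exp (∑ i, c i ^ 2 / 2) + Complex.exp (∑ i, c' i ^ 2 / 2)) / 2 := by
    simp only [hF]
    rw [integral_div, integral_add (std_integrable d c) (std_integrable d c'),
      std_cexp, std_cexp]
  rw [hIF, hS, hS', Complex.div_re]
  simp only [Complex.add_re, Complex.add_im, Complex.sub_re, Complex.sub_im,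
    Complex.exp_re, Complex.exp_im, Complex.ofReal_re, Complex.ofReal_im,
    Complex.mul_re, Complex.mul_im, Complex.I_re, Complex.I_im, Complex.normSq_ofNat]
  simp [Real.cos_neg]
  ring
end

section
/- Let ω₁,...,ω_m be i.i.d. N(0, I_d) and define the positive softmax estimator SM⁺_m(x,y) = (1/m) Σᵢ exp(ωᵢ^⊤ x - ‖x‖²/2) exp(ωᵢ^⊤ y - ‖y‖²/2). Then its mean squared error equals (1/m) exp(‖z‖²) exp(2 x^⊤ y) (1 - exp(-‖z‖²)) where z = x + y. -/
open MeasureTheory ProbabilityTheory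

open Real in

lemma key_cintegral (t : ℝ) :
    ∫ x : ℝ, Real.exp (-x^2/2 + t*x) = Real.sqrt (2*Real.pi) * Real.exp (t^2/2) := by
  have h1 : ∀ x : ℝ, Complex.exp ((-1/2 : ℂ) * (x:ℂ)^2 + (t:ℂ) * x + 0)
      = ((Real.exp (-x^2/2 + t*x) : ℝ) : ℂ) := by
    intro x; rw [Complex.ofReal_exp]; push_cast; ring_nf
  apply Complex.ofReal_injective
  calc ((∫ x : ℝ, Real.exp (-x^2/2 + t*x) : ℝ) : ℂ)
      = ∫ x : ℝ, ((Real.exp (-x^2/2 + t*x) : ℝ) : ℂ) := integral_ofReal.symm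
    _ = ∫ x : ℝ, Complex.exp ((-1/2 : ℂ) * (x:ℂ)^2 + (t:ℂ) * x + 0) := by simp_rw [h1]
    _ = ((Real.pi : ℂ) / -(-1/2 : ℂ)) ^ (1/2 : ℂ)
          * Complex.exp (0 - (t:ℂ)^2 / (4 * (-1/2))) :=
        integral_cexp_quadratic (by norm_num) _ _
    _ = ((Real.sqrt (2*Real.pi) * Real.exp (t^2/2) : ℝ) : ℂ) := by
        have e1 : ((Real.pi : ℂ) / -(-1/2 : ℂ)) = ((2 * Real.pi : ℝ) : ℂ) := by push_cast; ring
        have e2 : Complex.exp (0 - (t:ℂ)^2 / (4 * (-1/2))) = ((Real.exp (t^2/2) : ℝ) : ℂ) := by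
          rw [Complex.ofReal_exp]; push_cast; ring_nf
        rw [e1, e2, show (1/2 : ℂ) = ((1/2 : ℝ) : ℂ) by norm_num,
          ← Complex.ofReal_cpow (by positivity), ← Complex.ofReal_mul]
        congr 2
        rw [Real.sqrt_eq_rpow]

lemma key_integrable (t : ℝ) : Integrable (fun x : ℝ => Real.exp (-x^2/2 + t*x)) := by
  have h := integrable_cexp_quadratic (b := (1/2 : ℂ)) (by norm_num) (t : ℂ) 0
  have h1 : (fun x : ℝ => Real.exp (-x^2/2 + t*x))
      = fun x : ℝ => (Complex.exp (-(1/2 : ℂ) * (x:ℂ)^2 + (t:ℂ) * x + 0)).re := by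
    funext x
    rw [show (-(1/2 : ℂ) * (x:ℂ)^2 + (t:ℂ) * x + 0) = ((-x^2/2 + t*x : ℝ) : ℂ) by push_cast; ring,
      Complex.exp_ofReal_re]
  rw [h1]
  exact h.re

open scoped NNReal

lemma pdf_eq (x : ℝ) : gaussianPDFReal 0 1 x = (Real.sqrt (2*Real.pi))⁻¹ * Real.exp (-x^2/2) := by
  simp [gaussianPDFReal]

lemma integral_gaussianReal (g : ℝ → ℝ) :
    ∫ x, g x ∂ gaussianReal 0 1 = ∫ x : ℝ, gaussianPDFReal 0 1 x * g x := by
  rw [gaussianReal_of_var_ne_zero 0 one_ne_zero]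
  have h : gaussianPDF 0 1 = fun x => ((Real.toNNReal (gaussianPDFReal 0 1 x) : ℝ≥0) : ENNReal) := rfl
  rw [h, integral_withDensity_eq_integral_smul
    (by exact (measurable_gaussianPDFReal 0 1).real_toNNReal) g]
  congr 1
  funext x
  simp [NNReal.smul_def, Real.coe_toNNReal _ (gaussianPDFReal_nonneg 0 1 x)]

lemma mgf_std (t : ℝ) :
    ∫ x, Real.exp (t * x) ∂ gaussianReal 0 1 = Real.exp (t^2/2) := by
  rw [integral_gaussianReal]
  simp_rw [pdf_eq, mul_assoc, ← Real.exp_add]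
  rw [integral_const_mul, key_cintegral t, ← mul_assoc, inv_mul_cancel₀ (by positivity), one_mul]

lemma integrable_exp_mul_gaussian (t : ℝ) :
    Integrable (fun x => Real.exp (t * x)) (gaussianReal 0 1) := by
  rw [gaussianReal_of_var_ne_zero 0 one_ne_zero]
  have h : gaussianPDF 0 1 = fun x => ((Real.toNNReal (gaussianPDFReal 0 1 x) : ℝ≥0) : ENNReal) := rfl
  rw [h, integrable_withDensity_iff_integrable_smul
    (by exact (measurable_gaussianPDFReal 0 1).real_toNNReal)]
  have heq : (fun x : ℝ => (Real.toNNReal (gaussianPDFReal 0 1 x)) • Real.exp (t * x))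
      = fun x : ℝ => (Real.sqrt (2*Real.pi))⁻¹ * Real.exp (-x^2/2 + t*x) := by
    funext x
    rw [NNReal.smul_def, smul_eq_mul, Real.coe_toNNReal _ (gaussianPDFReal_nonneg 0 1 x), pdf_eq,
      mul_assoc, ← Real.exp_add]
  rw [heq]
  exact (key_integrable t).const_mul _

-- general pi-product integral for identical measures
lemma my_integral_pi_prod {ι : Type*} [Fintype ι] {E : Type*} [MeasurableSpace E]
    (μ : Measure E) [SigmaFinite μ] (f : ι → E → ℝ) :
    ∫ x : ι → E, ∏ i, f i (x i) ∂ Measure.pi (fun _ : ι => μ) = ∏ i, ∫ x, f i x ∂μ := by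
  letI : MeasureSpace E := ⟨μ⟩
  haveI : SigmaFinite (volume : Measure E) := ‹_›
  rw [show Measure.pi (fun _ : ι => μ) = (volume : Measure (ι → E)) from (volume_pi).symm]
  exact MeasureTheory.integral_fintype_prod_eq_prod (μ := fun _ => μ) (fun i => f i)

lemma my_integrable_pi_prod {ι : Type*} [Fintype ι] {E : Type*} [MeasurableSpace E]
    (μ : Measure E) [SigmaFinite μ] (f : ι → E → ℝ) (hf : ∀ i, Integrable (f i) μ) :
    Integrable (fun x : ι → E => ∏ i, f i (x i)) (Measure.pi (fun _ : ι => μ)) := by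
  letI : MeasureSpace E := ⟨μ⟩
  haveI : SigmaFinite (volume : Measure E) := ‹_›
  rw [show Measure.pi (fun _ : ι => μ) = (volume : Measure (ι → E)) from (volume_pi).symm]
  exact MeasureTheory.Integrable.fintype_prod hf

instance (d : ℕ) : IsProbabilityMeasure (stdGaussian d) := by
  unfold _root_.stdGaussian; infer_instance

lemma exp_dot_eq {d : ℕ} (t : Fin d → ℝ) (c : ℝ) (w : Fin d → ℝ) :
    Real.exp (dotR w t - c) = Real.exp (-c) * ∏ j, Real.exp (t j * w j) := by
  rw [← Real.exp_sum, ← Real.exp_add]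
  congr 1
  rw [dotR]
  rw [Finset.sum_congr rfl (fun j _ => mul_comm (w j) (t j))]
  ring

lemma integral_exp_dot {d : ℕ} (t : Fin d → ℝ) (c : ℝ) :
    ∫ w, Real.exp (dotR w t - c) ∂ stdGaussian d = Real.exp ((∑ j, t j^2)/2 - c) := by
  simp_rw [exp_dot_eq t c]
  rw [integral_const_mul, _root_.stdGaussian,
    my_integral_pi_prod (gaussianReal 0 1) (fun j x => Real.exp (t j * x))]
  simp_rw [mgf_std, ← Real.exp_sum, ← Real.exp_add]
  congr 1
  rw [Finset.sum_div]
  ring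

lemma integrable_exp_dot {d : ℕ} (t : Fin d → ℝ) (c : ℝ) :
    Integrable (fun w => Real.exp (dotR w t - c)) (stdGaussian d) := by
  simp_rw [exp_dot_eq t c]
  apply Integrable.const_mul
  exact my_integrable_pi_prod (gaussianReal 0 1) (fun j x => Real.exp (t j * x))
    (fun j => integrable_exp_mul_gaussian (t j))

noncomputable def gfun {d : ℕ} (x y w : Fin d → ℝ) : ℝ :=
  Real.exp (dotR w x - (∑ j, x j ^ 2) / 2) * Real.exp (dotR w y - (∑ j, y j ^ 2) / 2)

lemma sum_sq_add {d : ℕ} (x y : Fin d → ℝ) :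
    ∑ j, (x j + y j)^2 = (∑ j, x j^2) + (∑ j, y j^2) + 2 * dotR x y := by
  rw [dotR, Finset.mul_sum, ← Finset.sum_add_distrib, ← Finset.sum_add_distrib]
  exact Finset.sum_congr rfl (fun j _ => by ring)

lemma gfun_eq {d : ℕ} (x y w : Fin d → ℝ) :
    gfun x y w = Real.exp (dotR w (fun j => x j + y j)
      - ((∑ j, x j ^ 2) / 2 + (∑ j, y j ^ 2) / 2)) := by
  rw [gfun, ← Real.exp_add]
  congr 1
  have : dotR w (fun j => x j + y j) = dotR w x + dotR w y := by
    simp only [dotR, ← Finset.sum_add_distrib]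
    exact Finset.sum_congr rfl (fun j _ => by ring)
  rw [this]; ring

lemma gfun_sq_eq {d : ℕ} (x y w : Fin d → ℝ) :
    gfun x y w * gfun x y w = Real.exp (dotR w (fun j => 2 * (x j + y j))
      - ((∑ j, x j ^ 2) + (∑ j, y j ^ 2))) := by
  rw [gfun_eq, ← Real.exp_add]
  congr 1
  have : dotR w (fun j => 2 * (x j + y j)) = 2 * dotR w (fun j => x j + y j) := by
    simp only [dotR, Finset.mul_sum]
    exact Finset.sum_congr rfl (fun j _ => by ring)
  rw [this]; ring

lemma integral_gfun {d : ℕ} (x y : Fin d → ℝ) :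
    ∫ w, gfun x y w ∂ stdGaussian d = Real.exp (dotR x y) := by
  simp_rw [gfun_eq]
  rw [integral_exp_dot]
  congr 1
  rw [sum_sq_add]
  ring

lemma integral_gfun_sq {d : ℕ} (x y : Fin d → ℝ) :
    ∫ w, gfun x y w * gfun x y w ∂ stdGaussian d
      = Real.exp ((∑ j, (x j + y j)^2) + 2 * dotR x y) := by
  simp_rw [gfun_sq_eq]
  rw [integral_exp_dot]
  congr 1
  have h2 : ∑ j, (2 * (x j + y j))^2 = 4 * ∑ j, (x j + y j)^2 := by
    rw [Finset.mul_sum]; exact Finset.sum_congr rfl (fun j _ => by ring)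
  rw [h2, sum_sq_add]
  ring

lemma integrable_gfun {d : ℕ} (x y : Fin d → ℝ) :
    Integrable (gfun x y) (stdGaussian d) := by
  have : gfun x y = fun w => Real.exp (dotR w (fun j => x j + y j)
      - ((∑ j, x j ^ 2) / 2 + (∑ j, y j ^ 2) / 2)) := funext (gfun_eq x y)
  rw [this]; exact integrable_exp_dot _ _

lemma integrable_gfun_sq {d : ℕ} (x y : Fin d → ℝ) :
    Integrable (fun w => gfun x y w * gfun x y w) (stdGaussian d) := by
  have : (fun w => gfun x y w * gfun x y w) = fun w => Real.exp (dotR w (fun j => 2*(x j + y j))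
      - ((∑ j, x j ^ 2) + (∑ j, y j ^ 2))) := funext (gfun_sq_eq x y)
  rw [this]; exact integrable_exp_dot _ _

section coord
variable {ι E : Type*} [Fintype ι] [DecidableEq ι] [MeasurableSpace E]
  (ν : Measure E) [IsProbabilityMeasure ν] (f : E → ℝ)

lemma coord_prod_eq (i : ι) (W : ι → E) :
    f (W i) = ∏ r, (if r = i then f (W r) else 1) := by
  rw [Finset.prod_ite_eq' Finset.univ i (fun r => f (W r))]
  simp

lemma coord_integrable (hf : Integrable f ν) (i : ι) :
    Integrable (fun W : ι → E => f (W i)) (Measure.pi fun _ => ν) := by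
  rw [show (fun W : ι → E => f (W i))
      = fun W => ∏ r, (fun r v => if r = i then f v else 1) r (W r) from
    funext (fun W => coord_prod_eq f i W)]
  exact my_integrable_pi_prod ν (fun r v => if r = i then f v else 1) (fun r => by
    by_cases h : r = i <;> simp [h, hf, integrable_const])

lemma coord_integral (i : ι) :
    ∫ W : ι → E, f (W i) ∂ (Measure.pi fun _ => ν) = ∫ v, f v ∂ν := by
  rw [show (fun W : ι → E => f (W i))
      = fun W => ∏ r, (fun r v => if r = i then f v else 1) r (W r) from
    funext (fun W => coord_prod_eq f i W)]
  rw [my_integral_pi_prod ν (fun r v => if r = i then f v else 1)]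
  rw [Finset.prod_congr rfl (fun r _ => show (∫ v, (if r = i then f v else 1) ∂ν)
      = if r = i then ∫ v, f v ∂ν else 1 by by_cases h : r = i <;> simp [h])]
  rw [Finset.prod_ite_eq' Finset.univ i (fun _ => ∫ v, f v ∂ν)]
  simp

lemma pair_prod_eq (i k : ι) (W : ι → E) :
    f (W i) * f (W k)
      = ∏ r, ((if r = i then f (W r) else 1) * (if r = k then f (W r) else 1)) := by
  rw [Finset.prod_mul_distrib, Finset.prod_ite_eq' Finset.univ i (fun r => f (W r)),
    Finset.prod_ite_eq' Finset.univ k (fun r => f (W r))]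
  simp

lemma pair_integrable (hf : Integrable f ν) (hf2 : Integrable (fun v => f v * f v) ν)
    (i k : ι) :
    Integrable (fun W : ι → E => f (W i) * f (W k)) (Measure.pi fun _ => ν) := by
  rw [show (fun W : ι → E => f (W i) * f (W k))
      = fun W => ∏ r, (fun r v => (if r = i then f v else 1) * (if r = k then f v else 1)) r (W r)
      from funext (fun W => pair_prod_eq f i k W)]
  refine my_integrable_pi_prod ν
    (fun r v => (if r = i then f v else 1) * (if r = k then f v else 1)) (fun r => ?_)
  by_cases h1 : r = i <;> by_cases h2 : r = k
  · simp [h1, h2, h1.symm.trans h2, hf2]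
  · simp [h1, h2, show ¬ i = k from fun h => h2 (h1.trans h), hf]
  · simp [h1, h2, show ¬ k = i from fun h => h1 (h2.trans h), hf]
  · simp [h1, h2, integrable_const]

lemma pair_integral (hf2 : Integrable (fun v => f v * f v) ν) (i k : ι) :
    ∫ W : ι → E, f (W i) * f (W k) ∂ (Measure.pi fun _ => ν)
      = if i = k then ∫ v, f v * f v ∂ν else (∫ v, f v ∂ν) * ∫ v, f v ∂ν := by
  by_cases hik : i = k
  · subst hik
    rw [if_pos rfl]
    exact coord_integral ν (fun v => f v * f v) i
  · rw [if_neg hik]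
    rw [show (fun W : ι → E => f (W i) * f (W k))
        = fun W => ∏ r, (fun r v => (if r = i then f v else 1) * (if r = k then f v else 1)) r (W r)
        from funext (fun W => pair_prod_eq f i k W)]
    rw [my_integral_pi_prod ν
      (fun r v => (if r = i then f v else 1) * (if r = k then f v else 1))]
    have hfac : ∀ r : ι, (∫ v, (if r = i then f v else 1) * (if r = k then f v else 1) ∂ν)
        = (if r = i then ∫ v, f v ∂ν else 1) * (if r = k then ∫ v, f v ∂ν else 1) := by
      intro r
      by_cases h1 : r = i <;> by_cases h2 : r = k
      · exact absurd (h1.symm.trans h2) hik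
      · simp [h1, h2, hik]
      · simp [h1, h2, show ¬ k = i from fun h => hik h.symm]
      · simp [h1, h2]
    rw [Finset.prod_congr rfl (fun r _ => hfac r), Finset.prod_mul_distrib,
      Finset.prod_ite_eq' Finset.univ i (fun _ => ∫ v, f v ∂ν),
      Finset.prod_ite_eq' Finset.univ k (fun _ => ∫ v, f v ∂ν)]
    simp

end coord

theorem stmt7 (d m : ℕ) (hm : 0 < m) (x y : Fin d → ℝ) :
    (∫ W : Fin m → Fin d → ℝ,
        ((1 / (m : ℝ)) * ∑ i, Real.exp (dotR (W i) x - (∑ j, x j ^ 2) / 2) *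
            Real.exp (dotR (W i) y - (∑ j, y j ^ 2) / 2)
          - Real.exp (dotR x y)) ^ 2
        ∂ Measure.pi (fun _ : Fin m => stdGaussian d))
      = (1 / (m : ℝ)) * Real.exp (∑ j, (x j + y j) ^ 2) * Real.exp (2 * dotR x y) *
          (1 - Real.exp (-(∑ j, (x j + y j) ^ 2))) := by
  have hm' : (m:ℝ) ≠ 0 := Nat.cast_ne_zero.mpr hm.ne'
  have hg := integrable_gfun x y
  have hg2 := integrable_gfun_sq x y
  set ν := stdGaussian d with hν
  set q := Real.exp (dotR x y) with hqdef
  set S := ∑ j, (x j + y j) ^ 2 with hSdef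
  set E2 := Real.exp (S + 2 * dotR x y) with hE2def
  show (∫ W : Fin m → Fin d → ℝ,
      ((1 / (m : ℝ)) * ∑ i, gfun x y (W i) - q) ^ 2 ∂ Measure.pi (fun _ : Fin m => ν))
    = (1 / (m : ℝ)) * Real.exp S * Real.exp (2 * dotR x y) * (1 - Real.exp (-S))
  have hbody : ∀ W : Fin m → Fin d → ℝ,
      ((1 / (m : ℝ)) * ∑ i, gfun x y (W i) - q) ^ 2
        = (1/(m:ℝ))^2 * (∑ i, ∑ k, gfun x y (W i) * gfun x y (W k))
          - (2 * q * (1/(m:ℝ))) * (∑ i, gfun x y (W i)) + q * q := by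
    intro W
    rw [← Finset.sum_mul_sum]
    ring
  simp_rw [hbody]
  have hIpair : ∀ i k : Fin m, Integrable
      (fun W : Fin m → Fin d → ℝ => gfun x y (W i) * gfun x y (W k))
      (Measure.pi fun _ => ν) := fun i k => pair_integrable ν (gfun x y) hg hg2 i k
  have hI1 : Integrable (fun W : Fin m → Fin d → ℝ =>
      ∑ i, ∑ k, gfun x y (W i) * gfun x y (W k)) (Measure.pi fun _ => ν) :=
    integrable_finset_sum _ (fun i _ => integrable_finset_sum _ (fun k _ => hIpair i k))
  have hI2 : Integrable (fun W : Fin m → Fin d → ℝ => ∑ i, gfun x y (W i))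
      (Measure.pi fun _ => ν) :=
    integrable_finset_sum _ (fun i _ => coord_integrable ν (gfun x y) hg i)
  have hfsub : Integrable (fun W : Fin m → Fin d → ℝ =>
      (1/(m:ℝ))^2 * (∑ i, ∑ k, gfun x y (W i) * gfun x y (W k))
        - (2 * q * (1/(m:ℝ))) * (∑ i, gfun x y (W i))) (Measure.pi fun _ => ν) :=
    (hI1.const_mul _).sub (hI2.const_mul _)
  rw [integral_add hfsub (integrable_const _),
    integral_sub (hI1.const_mul _) (hI2.const_mul _),
    integral_const_mul, integral_const_mul, integral_const]
  have e2 : ∫ W : Fin m → Fin d → ℝ, ∑ i, gfun x y (W i) ∂ (Measure.pi fun _ => ν)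
      = (m:ℝ) * q := by
    rw [integral_finset_sum _ (fun i _ => coord_integrable ν (gfun x y) hg i)]
    have : ∀ i : Fin m, ∫ W : Fin m → Fin d → ℝ, gfun x y (W i) ∂ (Measure.pi fun _ => ν)
        = q := fun i => by rw [coord_integral ν (gfun x y) i, hν, integral_gfun x y]
    rw [Finset.sum_congr rfl (fun i _ => this i)]
    simp [Finset.sum_const, mul_comm]
  have e1 : ∫ W : Fin m → Fin d → ℝ, ∑ i, ∑ k, gfun x y (W i) * gfun x y (W k)
        ∂ (Measure.pi fun _ => ν)
      = (m:ℝ) * ((m:ℝ) * (q*q) + (E2 - q*q)) := by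
    rw [integral_finset_sum _ (fun i _ => integrable_finset_sum _ (fun k _ => hIpair i k))]
    rw [Finset.sum_congr rfl (fun i _ =>
      integral_finset_sum _ (fun k _ => hIpair i k))]
    have hEpair : ∀ i k : Fin m,
        ∫ W : Fin m → Fin d → ℝ, gfun x y (W i) * gfun x y (W k) ∂ (Measure.pi fun _ => ν)
          = if i = k then E2 else q * q := by
      intro i k
      rw [pair_integral ν (gfun x y) hg2 i k, hν, integral_gfun x y, integral_gfun_sq x y]
    rw [Finset.sum_congr rfl (fun i _ => Finset.sum_congr rfl (fun k _ => hEpair i k))]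
    have hrow : ∀ i : Fin m, ∑ k, (if i = k then E2 else q * q)
        = (m:ℝ) * (q*q) + (E2 - q*q) := by
      intro i
      have : ∀ k : Fin m, (if i = k then E2 else q * q)
          = q*q + (if i = k then E2 - q*q else 0) := by
        intro k; split_ifs <;> ring
      rw [Finset.sum_congr rfl (fun k _ => this k), Finset.sum_add_distrib,
        Finset.sum_const, Finset.sum_ite_eq]
      simp [mul_comm]
    rw [Finset.sum_congr rfl (fun i _ => hrow i), Finset.sum_const, Finset.card_univ,
      Fintype.card_fin, nsmul_eq_mul]
  rw [e1, e2]
  have hmeas : ((Measure.pi fun _ : Fin m => ν) Set.univ).toReal = 1 := by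
    simp [measure_univ]
  rw [smul_eq_mul] at *
  simp only [hmeas, probReal_univ, one_mul, smul_eq_mul]
  have hE2' : E2 = Real.exp S * Real.exp (2 * dotR x y) := by
    rw [hE2def, Real.exp_add]
  have hq2 : q * q = Real.exp (2 * dotR x y) := by
    rw [hqdef, ← Real.exp_add]; ring_nf
  have hSneg : Real.exp (-S) = (Real.exp S)⁻¹ := Real.exp_neg S
  rw [hE2', hSneg, show Real.exp (2 * dotR x y) = q * q from hq2.symm]
  have hS0 : Real.exp S ≠ 0 := (Real.exp_pos S).ne'
  field_simp
  ring
end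

section
/- Let ω₁,...,ω_m be i.i.d. N(0, I_d) and SM^trig_m(x,y) = exp((‖x‖²+‖y‖²)/2) · (1/m) Σᵢ cos(ωᵢ^⊤(x-y)). Then MSE(SM^trig_m(x,y)) = (1/(2m)) exp(‖x+y‖²) exp(-2 x^⊤ y) (1 - exp(-‖x-y‖²))². -/
open MeasureTheory ProbabilityTheory
open NNReal ENNReal

lemma dotR_comm {d : ℕ} (u v : Fin d → ℝ) : dotR u v = dotR v u := by
  unfold dotR; simp_rw [mul_comm]

lemma pi_integral_prod {𝕜 : Type*} [RCLike 𝕜] {α : Type*} [MeasurableSpace α] (ν : Measure α)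
    [SigmaFinite ν] {m : ℕ} (f : Fin m → α → 𝕜) :
    ∫ W : Fin m → α, ∏ i, f i (W i) ∂Measure.pi (fun _ => ν) = ∏ i, ∫ x, f i x ∂ν := by
  letI : MeasureSpace α := ⟨ν⟩
  exact MeasureTheory.integral_fintype_prod_eq_prod (fun i => f i) (μ := fun _ => ν)

lemma instProbStd (d : ℕ) : IsProbabilityMeasure (stdGaussian d) := by
  unfold _root_.stdGaussian; infer_instance

lemma pi_eval_integral {α : Type*} [MeasurableSpace α] (ν : Measure α) [IsProbabilityMeasure ν]
    {m : ℕ} (i : Fin m) (g : α → ℝ) :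
    ∫ W : Fin m → α, g (W i) ∂Measure.pi (fun _ => ν) = ∫ x, g x ∂ν := by
  have h := pi_integral_prod (𝕜 := ℝ) ν (fun k => if k = i then g else fun _ => 1)
  have h1 : ∀ W : Fin m → α, (∏ k, (if k = i then g else fun _ => (1:ℝ)) (W k)) = g (W i) := by
    intro W
    rw [Finset.prod_eq_single i (fun k _ hk => by simp [hk]) (by simp)]
    simp
  have h2 : (∏ k, ∫ x, (if k = i then g else fun _ => (1:ℝ)) x ∂ν) = ∫ x, g x ∂ν := by
    rw [Finset.prod_eq_single i (fun k _ hk => by simp [hk]) (by simp)]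
    simp
  rw [← h2, ← h]
  exact integral_congr_ae (Filter.Eventually.of_forall fun W => (h1 W).symm)

lemma pi_eval_pair_integral {α : Type*} [MeasurableSpace α] (ν : Measure α) [IsProbabilityMeasure ν]
    {m : ℕ} {i j : Fin m} (hij : i ≠ j) (g : α → ℝ) :
    ∫ W : Fin m → α, g (W i) * g (W j) ∂Measure.pi (fun _ => ν)
      = (∫ x, g x ∂ν) * (∫ x, g x ∂ν) := by
  set f : Fin m → α → ℝ := fun k => if k = i then g else if k = j then g else fun _ => 1 with hf
  have h := pi_integral_prod (𝕜 := ℝ) ν f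
  have hpair : ∀ (F : Fin m → ℝ), (∀ k, k ≠ i → k ≠ j → F k = 1) →
      (∏ k, F k) = F i * F j := by
    intro F hF
    rw [← Finset.prod_subset (Finset.subset_univ ({i, j} : Finset (Fin m)))
      (fun k _ hk => hF k (fun h => hk (by simp [h])) (fun h => hk (by simp [h])))]
    exact Finset.prod_pair hij
  have h1 : ∀ W : Fin m → α, (∏ k, f k (W k)) = g (W i) * g (W j) := by
    intro W
    rw [hpair _ (fun k hk1 hk2 => by simp [hf, hk1, hk2])]
    simp [hf, hij]
  have h2 : (∏ k, ∫ x, f k x ∂ν) = (∫ x, g x ∂ν) * (∫ x, g x ∂ν) := by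
    rw [hpair _ (fun k hk1 hk2 => by simp [hf, hk1, hk2])]
    simp [hf, hij]
  rw [← h2, ← h]
  exact integral_congr_ae (Filter.Eventually.of_forall fun W => (h1 W).symm)

lemma gauss_cexp_s8 (t : ℝ) :
    ∫ ω : ℝ, Complex.exp (t * ω * Complex.I) ∂gaussianReal 0 1
      = (Real.exp (-t ^ 2 / 2) : ℂ) := by
  have h1 : gaussianReal 0 1 = MeasureTheory.volume.withDensity
      (fun x => ((Real.toNNReal (gaussianPDFReal 0 1 x) : ℝ≥0) : ℝ≥0∞)) := by
    rw [gaussianReal_of_var_ne_zero 0 one_ne_zero]; rfl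
  have hmeas : Measurable fun x => Real.toNNReal (gaussianPDFReal 0 1 x) :=
    (measurable_gaussianPDFReal 0 1).real_toNNReal
  rw [h1, integral_withDensity_eq_integral_smul hmeas]
  have h2 : ∀ x : ℝ, (Real.toNNReal (gaussianPDFReal 0 1 x)) • Complex.exp (t * x * Complex.I)
      = ((Real.sqrt (2 * Real.pi))⁻¹ : ℂ) *
        Complex.exp ((-(1/2) : ℂ) * x ^ 2 + (t * Complex.I) * x + 0) := by
    intro x
    rw [NNReal.smul_def, Real.coe_toNNReal _ (gaussianPDFReal_nonneg 0 1 x)]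
    unfold gaussianPDFReal
    rw [Complex.real_smul]
    rw [show (2 * Real.pi * ((1:ℝ≥0):ℝ)) = 2 * Real.pi by norm_num]
    rw [Complex.ofReal_mul, mul_assoc, Complex.ofReal_inv]
    congr 1
    rw [Complex.ofReal_exp, ← Complex.exp_add]
    congr 1
    push_cast
    ring
  simp_rw [h2]
  rw [integral_const_mul, integral_cexp_quadratic (by norm_num : (-(1/2):ℂ).re < 0) (t * Complex.I) 0]
  have h3 : ((Real.pi : ℂ) / (- -(1/2))) ^ (1/2 : ℂ) = (Real.sqrt (2 * Real.pi) : ℂ) := by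
    rw [neg_neg]
    have : ((Real.pi : ℂ) / (1/2)) = ((2 * Real.pi : ℝ) : ℂ) := by push_cast; ring
    rw [this, show (1/2 : ℂ) = ((1/2 : ℝ) : ℂ) by norm_num,
      ← Complex.ofReal_cpow (by positivity)]
    norm_num [Real.sqrt_eq_rpow]
  rw [h3]
  have h4 : (0 : ℂ) - (t * Complex.I) ^ 2 / (4 * -(1/2)) = ((-t^2/2 : ℝ) : ℂ) := by
    push_cast; rw [mul_pow, Complex.I_sq]; ring
  rw [h4, ← Complex.ofReal_exp, ← mul_assoc]
  rw [inv_mul_cancel₀ (Complex.ofReal_ne_zero.mpr (by positivity)), one_mul]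

lemma std_cexp_s8 {d : ℕ} (a : Fin d → ℝ) :
    ∫ w : Fin d → ℝ, Complex.exp ((dotR a w : ℝ) * Complex.I) ∂stdGaussian d
      = (Real.exp (-(∑ j, a j ^ 2) / 2) : ℂ) := by
  have h : ∀ w : Fin d → ℝ, Complex.exp ((dotR a w : ℝ) * Complex.I)
      = ∏ j, Complex.exp ((a j : ℂ) * (w j : ℂ) * Complex.I) := by
    intro w
    rw [← Complex.exp_sum]
    congr 1
    unfold dotR
    push_cast
    rw [Finset.sum_mul]
  simp_rw [h]
  rw [_root_.stdGaussian, pi_integral_prod (gaussianReal 0 1) (fun j (x : ℝ) => Complex.exp ((a j : ℂ) * x * Complex.I))]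
  simp_rw [gauss_cexp_s8]
  rw [← Complex.ofReal_prod, ← Real.exp_sum]
  congr 2
  rw [← Finset.sum_div, ← Finset.sum_neg_distrib]

lemma std_cos {d : ℕ} (a : Fin d → ℝ) :
    ∫ w : Fin d → ℝ, Real.cos (dotR a w) ∂stdGaussian d
      = Real.exp (-(∑ j, a j ^ 2) / 2) := by
  have hcont : Continuous fun w : Fin d → ℝ => Complex.exp ((dotR a w : ℝ) * Complex.I) := by
    apply Complex.continuous_exp.comp
    apply Continuous.mul _ continuous_const
    apply Complex.continuous_ofReal.comp
    unfold dotR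
    exact continuous_finset_sum _ fun i _ => (continuous_const.mul (continuous_apply i))
  have : IsProbabilityMeasure (stdGaussian d) := by
    unfold _root_.stdGaussian; infer_instance
  have hint : Integrable (fun w : Fin d → ℝ => Complex.exp ((dotR a w : ℝ) * Complex.I))
      (stdGaussian d) := by
    apply (integrable_const (1 : ℝ)).mono' hcont.aestronglyMeasurable
    filter_upwards with w
    simp [Complex.norm_exp_ofReal_mul_I]
  have h2 := integral_re hint (μ := stdGaussian d)
  rw [std_cexp_s8 a] at h2
  simp only [RCLike.re_to_complex, Complex.ofReal_re] at h2
  rw [← h2]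
  apply integral_congr_ae
  filter_upwards with w
  exact (Complex.exp_ofReal_mul_I_re _).symm

lemma std_cos_sq {d : ℕ} (a : Fin d → ℝ) :
    ∫ w : Fin d → ℝ, Real.cos (dotR a w) ^ 2 ∂stdGaussian d
      = (1 + Real.exp (-(2 * ∑ j, a j ^ 2))) / 2 := by
  haveI := instProbStd d
  have h : ∀ w : Fin d → ℝ, Real.cos (dotR a w) ^ 2
      = 1/2 + (1/2) * Real.cos (dotR (fun j => 2 * a j) w) := by
    intro w
    have : dotR (fun j => 2 * a j) w = 2 * dotR a w := by
      unfold dotR; rw [Finset.mul_sum]; exact Finset.sum_congr rfl fun j _ => by ring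
    rw [this, Real.cos_sq]
    ring
  simp_rw [h]
  have hint : Integrable (fun w : Fin d → ℝ => Real.cos (dotR (fun j => 2 * a j) w))
      (stdGaussian d) := by
    have hc : Continuous fun w : Fin d → ℝ => Real.cos (dotR (fun j => 2 * a j) w) := by
      apply Real.continuous_cos.comp
      unfold dotR
      exact continuous_finset_sum _ fun i _ => (continuous_const.mul (continuous_apply i))
    apply (integrable_const (1 : ℝ)).mono' hc.aestronglyMeasurable
    filter_upwards with w
    simp [Real.abs_cos_le_one]
  rw [integral_add (integrable_const _) (hint.const_mul _), integral_const, integral_const_mul,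
    std_cos]
  have : -(∑ j, (2 * a j) ^ 2) / 2 = -(2 * ∑ j, a j ^ 2) := by
    rw [show ∑ j, (2 * a j)^2 = ∑ j, 4 * a j ^2 from Finset.sum_congr rfl fun j _ => by ring,
      Finset.mul_sum, neg_div, Finset.sum_div, neg_inj]
    exact Finset.sum_congr rfl fun j _ => by ring
  rw [this]
  simp
  ring

theorem stmt8 (d m : ℕ) (hm : 0 < m) (x y : Fin d → ℝ) :
    (∫ W : Fin m → Fin d → ℝ,
        (Real.exp (((∑ j, x j ^ 2) + (∑ j, y j ^ 2)) / 2) *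
            ((1 / (m : ℝ)) * ∑ i, Real.cos (dotR (W i) (x - y)))
          - Real.exp (dotR x y)) ^ 2
        ∂ Measure.pi (fun _ : Fin m => stdGaussian d))
      = (1 / (2 * m : ℝ)) * Real.exp (∑ j, (x j + y j) ^ 2) * Real.exp (-(2 * dotR x y)) *
          (1 - Real.exp (-(∑ j, (x j - y j) ^ 2))) ^ 2 := by
  haveI := instProbStd d
  haveI : IsProbabilityMeasure (Measure.pi (fun _ : Fin m => stdGaussian d)) := inferInstance
  set P := Measure.pi (fun _ : Fin m => stdGaussian d) with hP
  set g : (Fin d → ℝ) → ℝ := fun w => Real.cos (dotR w (x - y)) with hg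
  set s : ℝ := ∑ j, (x j - y j) ^ 2 with hs
  set e : ℝ := Real.exp (-s / 2) with he
  set q : ℝ := (1 + Real.exp (-(2 * s))) / 2 with hq
  set c : ℝ := Real.exp (((∑ j, x j ^ 2) + (∑ j, y j ^ 2)) / 2) with hc
  set μv : ℝ := Real.exp (dotR x y) with hμ
  -- basic facts about g
  have hgc : Continuous g := by
    apply Real.continuous_cos.comp
    unfold dotR
    exact continuous_finset_sum _ fun i _ => ((continuous_apply i).mul continuous_const)
  have hgb : ∀ w, |g w| ≤ 1 := fun w => Real.abs_cos_le_one _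
  have hxy : (∑ j, ((x - y) j) ^ 2) = s := by
    rw [hs]; exact Finset.sum_congr rfl fun j _ => by simp
  have hge : ∫ w, g w ∂stdGaussian d = e := by
    simp_rw [hg, dotR_comm _ (x - y)]
    rw [std_cos (x - y), hxy, he]
  have hgq : ∫ w, g w ^ 2 ∂stdGaussian d = q := by
    simp_rw [hg, dotR_comm _ (x - y)]
    rw [std_cos_sq (x - y), hxy, hq]
  -- integrability of coordinate functions
  have hgci : ∀ i : Fin m, Continuous fun W : Fin m → Fin d → ℝ => g (W i) :=
    fun i => hgc.comp (continuous_apply i)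
  have hint1 : ∀ i : Fin m, Integrable (fun W : Fin m → Fin d → ℝ => g (W i)) P := by
    intro i
    apply (integrable_const (1 : ℝ)).mono' (hgci i).aestronglyMeasurable
    filter_upwards with W using hgb _
  have hint2 : ∀ i j : Fin m, Integrable (fun W : Fin m → Fin d → ℝ => g (W i) * g (W j)) P := by
    intro i j
    apply (integrable_const (1 : ℝ)).mono' ((hgci i).mul (hgci j)).aestronglyMeasurable
    filter_upwards with W
    rw [Pi.mul_apply, show ‖g (W i) * g (W j)‖ = |g (W i)| * |g (W j)| from abs_mul _ _]
    exact mul_le_one₀ (hgb _) (abs_nonneg _) (hgb _)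
  have hintS : Integrable (fun W : Fin m → Fin d → ℝ => ∑ i, g (W i)) P :=
    integrable_finset_sum _ fun i _ => hint1 i
  have hintS2 : Integrable (fun W : Fin m → Fin d → ℝ => (∑ i, g (W i)) ^ 2) P := by
    have : ∀ W : Fin m → Fin d → ℝ, (∑ i, g (W i)) ^ 2 = ∑ i, ∑ j, g (W i) * g (W j) := by
      intro W; rw [sq, Finset.sum_mul_sum]
    simp_rw [this]
    exact integrable_finset_sum _ fun i _ => integrable_finset_sum _ fun j _ => hint2 i j
  -- first moment
  have hA : ∫ W, (∑ i, g (W i)) ∂P = m * e := by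
    rw [integral_finset_sum _ fun i _ => hint1 i]
    have : ∀ i : Fin m, ∫ W, g (W i) ∂P = e := fun i => by
      rw [hP, pi_eval_integral _ i g, hge]
    simp_rw [this, Finset.sum_const, Finset.card_univ, Fintype.card_fin, nsmul_eq_mul]
  -- second moment
  have hB : ∫ W, (∑ i, g (W i)) ^ 2 ∂P = m * q + (m ^ 2 - m) * e ^ 2 := by
    have h0 : ∀ W : Fin m → Fin d → ℝ, (∑ i, g (W i)) ^ 2 = ∑ i, ∑ j, g (W i) * g (W j) := by
      intro W; rw [sq, Finset.sum_mul_sum]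
    simp_rw [h0]
    rw [integral_finset_sum _ fun i _ => integrable_finset_sum _ fun j _ => hint2 i j]
    have h1 : ∀ i : Fin m, ∫ W, (∑ j, g (W i) * g (W j)) ∂P = q + (m - 1) * e ^ 2 := by
      intro i
      rw [integral_finset_sum _ fun j _ => hint2 i j]
      have h2 : ∀ j : Fin m, ∫ W, g (W i) * g (W j) ∂P
          = if i = j then q else e ^ 2 := by
        intro j
        by_cases hij : i = j
        · subst hij
          rw [if_pos rfl]
          have h3 : (∫ W, g (W i) * g (W i) ∂P) = ∫ W, (fun w => g w ^ 2) (W i) ∂P := by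
            congr 1; ext W; exact (sq (g (W i))).symm
          rw [h3, hP, pi_eval_integral _ i (fun w => g w ^ 2), hgq]
        · rw [if_neg hij, hP, pi_eval_pair_integral _ hij g, hge, sq]
      simp_rw [h2]
      have h4 : ∀ j : Fin m, (if i = j then q else e ^ 2)
          = e ^ 2 + if i = j then q - e ^ 2 else 0 := by
        intro j; by_cases h : i = j <;> simp [h]
      simp_rw [h4]
      rw [Finset.sum_add_distrib, Finset.sum_const, Finset.sum_ite_eq,
        if_pos (Finset.mem_univ i), Finset.card_univ, Fintype.card_fin, nsmul_eq_mul]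
      ring
    simp_rw [h1]
    rw [Finset.sum_const, Finset.card_univ, Fintype.card_fin, nsmul_eq_mul]
    ring
  -- expand the square
  have hkey : ∀ W : Fin m → Fin d → ℝ,
      (c * ((1 / (m : ℝ)) * ∑ i, g (W i)) - μv) ^ 2
        = (c / m) ^ 2 * (∑ i, g (W i)) ^ 2 - (2 * c * μv / m) * (∑ i, g (W i)) + μv ^ 2 := by
    intro W; ring
  have i1 : Integrable (fun W : Fin m → Fin d → ℝ =>
      (c / m) ^ 2 * (∑ i, g (W i)) ^ 2 - (2 * c * μv / m) * (∑ i, g (W i))) P :=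
    (hintS2.const_mul _).sub (hintS.const_mul _)
  calc (∫ W : Fin m → Fin d → ℝ,
        (c * ((1 / (m : ℝ)) * ∑ i, Real.cos (dotR (W i) (x - y))) - μv) ^ 2 ∂P)
      = ∫ W, ((c / m) ^ 2 * (∑ i, g (W i)) ^ 2 - (2 * c * μv / m) * (∑ i, g (W i)) + μv ^ 2) ∂P := by
        exact integral_congr_ae (Filter.Eventually.of_forall fun W => hkey W)
    _ = (c / m) ^ 2 * (m * q + (m ^ 2 - m) * e ^ 2) - (2 * c * μv / m) * (m * e) + μv ^ 2 := by
        rw [integral_add i1 (integrable_const _),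
          integral_sub (hintS2.const_mul _) (hintS.const_mul _),
          integral_const_mul, integral_const_mul, hA, hB, integral_const]
        simp
    _ = (1 / (2 * m : ℝ)) * Real.exp (∑ j, (x j + y j) ^ 2) * Real.exp (-(2 * dotR x y)) *
          (1 - Real.exp (-s)) ^ 2 := by
        have hmu : μv = c * e := by
          rw [hμ, hc, he, ← Real.exp_add]
          congr 1
          rw [hs]
          have hexp : (∑ j, (x j - y j) ^ 2)
              = (∑ j, x j ^ 2) - 2 * dotR x y + ∑ j, y j ^ 2 := by
            unfold dotR
            rw [Finset.mul_sum, ← Finset.sum_sub_distrib, ← Finset.sum_add_distrib]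
            exact Finset.sum_congr rfl fun j _ => by ring
          rw [hexp]; unfold dotR; ring
        have hcc : Real.exp (∑ j, (x j + y j) ^ 2) * Real.exp (-(2 * dotR x y)) = c ^ 2 := by
          rw [hc, ← Real.exp_nat_mul, ← Real.exp_add]
          congr 1
          have hexp : (∑ j, (x j + y j) ^ 2)
              = (∑ j, x j ^ 2) + 2 * dotR x y + ∑ j, y j ^ 2 := by
            unfold dotR
            rw [Finset.mul_sum, ← Finset.sum_add_distrib, ← Finset.sum_add_distrib]
            exact Finset.sum_congr rfl fun j _ => by ring
          rw [hexp]; push_cast; ring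
        have he2 : Real.exp (-s) = e ^ 2 := by
          rw [he, ← Real.exp_nat_mul]; congr 1; push_cast; ring
        have he4 : Real.exp (-(2 * s)) = e ^ 4 := by
          rw [he, ← Real.exp_nat_mul]; congr 1; push_cast; ring
        rw [mul_assoc (1 / (2 * (m : ℝ))), hcc, hmu, hq, he4, he2]
        have hm' : (m : ℝ) ≠ 0 := Nat.cast_ne_zero.mpr hm.ne'
        field_simp
        ring
end
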